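/- Let P ∈ ℝ^{n×k}, let Q ∈ ℝ^{m×k} have full column rank, y ∈ ℝ^m, ε ≥ 0, λ ≥ 0, and set K := QᵀQ, c := K^{-1/2} Qᵀ y, s := √(yᵀy − cᵀc), R := P K^{1/2}. Then the optimal value of min_{w ∈ ℝ^n} ‖Q Pᵀ w − y‖₂ + ε‖w‖₂ + λ‖w‖₁ equals the supremum of uᵀ c + s·t over all u ∈ ℝ^k, t ∈ ℝ, v, r ∈ ℝ^n satisfying ‖(u, t)‖₂ ≤ 1 (the Euclidean norm of the concatenated vector in ℝ^{k+1}), ‖v‖_∞ ≤ λ, ‖r‖₂ ≤ ε, and R u = v + r. -/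

import Mathlib

open Matrix

/-- Euclidean norm of a vector in `ℝ^n`. -/
noncomputable def norm2 {n : ℕ} (x : Fin n → ℝ) : ℝ := Real.sqrt (∑ i, x i ^ 2)

/-- ℓ1 norm of a vector in `ℝ^n`. -/
noncomputable def norm1 {n : ℕ} (x : Fin n → ℝ) : ℝ := ∑ i, |x i|

/-- Sup (ℓ∞) norm of a vector in `ℝ^n`. -/
noncomputable def normInf {n : ℕ} (x : Fin n → ℝ) : ℝ := ⨆ i, |x i|

open scoped ComplexOrder in
/-- The positive semidefinite square root of a positive semidefinite matrix (as defined in the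
older Mathlib, where it was `Matrix.PosSemidef.sqrt`). -/
noncomputable def Matrix.PosSemidef.sqrt {n : Type*} [Fintype n] [DecidableEq n] {𝕜 : Type*} [RCLike 𝕜]
    {A : Matrix n n 𝕜} (hA : A.PosSemidef) : Matrix n n 𝕜 :=
  (hA.1.eigenvectorUnitary : Matrix n n 𝕜) * diagonal ((↑) ∘ (√·) ∘ hA.1.eigenvalues) *
    (star hA.1.eigenvectorUnitary : Matrix n n 𝕜)

open scoped ComplexOrder in
lemma psd_sqrt_mul_self {n : Type*} [Fintype n] [DecidableEq n] {𝕜 : Type*} [RCLike 𝕜]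
    {A : Matrix n n 𝕜} (hA : A.PosSemidef) : hA.sqrt * hA.sqrt = A := by
  have hD : diagonal ((↑) ∘ (√·) ∘ hA.1.eigenvalues : n → 𝕜) *
      diagonal ((↑) ∘ (√·) ∘ hA.1.eigenvalues) = diagonal (RCLike.ofReal ∘ hA.1.eigenvalues) := by
    rw [diagonal_mul_diagonal]; congr 1; funext i
    simp only [Function.comp_apply, ← RCLike.ofReal_mul, Real.mul_self_sqrt (hA.eigenvalues_nonneg i)]
  have hu : (star hA.1.eigenvectorUnitary : Matrix n n 𝕜) * (hA.1.eigenvectorUnitary : Matrix n n 𝕜)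
      = 1 := Unitary.coe_star_mul_self _
  conv_rhs => rw [hA.1.spectral_theorem, Unitary.conjStarAlgAut_apply]
  rw [Matrix.PosSemidef.sqrt, ← hD]
  simp only [Matrix.mul_assoc]
  rw [← Matrix.mul_assoc (star hA.1.eigenvectorUnitary : Matrix n n 𝕜), hu, Matrix.one_mul]

open scoped ComplexOrder in
lemma psd_sqrt_hermitian {n : Type*} [Fintype n] [DecidableEq n] {𝕜 : Type*} [RCLike 𝕜]
    {A : Matrix n n 𝕜} (hA : A.PosSemidef) : (hA.sqrt)ᴴ = hA.sqrt := by
  simp [Matrix.PosSemidef.sqrt, Matrix.conjTranspose_mul, Matrix.mul_assoc,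
    Matrix.star_eq_conjTranspose, Matrix.diagonal_conjTranspose, Function.comp_def,
    RCLike.star_def, RCLike.conj_ofReal]
  congr 3
  funext x
  simp [RCLike.star_def, RCLike.conj_ofReal]

lemma norm2_nonneg {n : ℕ} (x : Fin n → ℝ) : 0 ≤ norm2 x := Real.sqrt_nonneg _

lemma sq_norm2 {n : ℕ} (x : Fin n → ℝ) : norm2 x ^ 2 = ∑ i, x i ^ 2 := by
  rw [norm2, Real.sq_sqrt (Finset.sum_nonneg fun i _ => sq_nonneg _)]

lemma cs_dot {n : ℕ} (x y : Fin n → ℝ) : x ⬝ᵥ y ≤ norm2 x * norm2 y := by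
  simpa [dotProduct, norm2] using Real.sum_mul_le_sqrt_mul_sqrt Finset.univ x y

lemma cs_dot2 {n : ℕ} (x y : Fin n → ℝ) (a b : ℝ) :
    x ⬝ᵥ y + a * b ≤ Real.sqrt ((∑ i, x i ^ 2) + a ^ 2) * Real.sqrt ((∑ i, y i ^ 2) + b ^ 2) := by
  have := Real.sum_mul_le_sqrt_mul_sqrt Finset.univ (Fin.cons a x : Fin (n+1) → ℝ) (Fin.cons b y)
  simp only [Fin.sum_univ_succ, Fin.cons_succ, Fin.cons_zero] at this
  simpa [dotProduct, add_comm] using this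

lemma sup_pair {k : ℕ} (a : Fin k → ℝ) (b : ℝ) (hb : 0 ≤ b) :
    IsGreatest {x | ∃ u t, Real.sqrt ((∑ i, u i ^ 2) + t ^ 2) ≤ 1 ∧ x = u ⬝ᵥ a + t * b}
      (Real.sqrt ((∑ i, a i ^ 2) + b ^ 2)) := by
  set h := Real.sqrt ((∑ i, a i ^ 2) + b ^ 2) with hh
  have hnn : 0 ≤ (∑ i, a i ^ 2) + b ^ 2 :=
    add_nonneg (Finset.sum_nonneg fun i _ => sq_nonneg _) (sq_nonneg _)
  have hsq : h ^ 2 = (∑ i, a i ^ 2) + b ^ 2 := Real.sq_sqrt hnn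
  have h0 : 0 ≤ h := Real.sqrt_nonneg _
  constructor
  · rcases eq_or_lt_of_le h0 with h0' | hpos
    · refine ⟨0, 0, by simp, ?_⟩
      simp [← h0', dotProduct]
    · refine ⟨h⁻¹ • a, b / h, ?_, ?_⟩
      · have : (∑ i, (h⁻¹ • a) i ^ 2) + (b / h) ^ 2 = h⁻¹ ^ 2 * ((∑ i, a i ^ 2) + b ^ 2) := by
          simp only [Pi.smul_apply, smul_eq_mul, mul_pow, div_pow, ← Finset.mul_sum]
          field_simp
        rw [this, ← hsq, ← mul_pow, Real.sqrt_sq (by positivity),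
          inv_mul_cancel₀ (ne_of_gt hpos)]
      · have e1 : (h⁻¹ • a) ⬝ᵥ a + b / h * b = h⁻¹ * ((∑ i, a i ^ 2) + b ^ 2) := by
          simp only [dotProduct, Pi.smul_apply, smul_eq_mul]
          rw [div_mul_eq_mul_div, div_eq_mul_inv, mul_add, Finset.mul_sum]
          ring_nf
        rw [e1, ← hsq, sq, ← mul_assoc, inv_mul_cancel₀ (ne_of_gt hpos), one_mul]
  · rintro x ⟨u, t, hut, rfl⟩
    calc u ⬝ᵥ a + t * b ≤ Real.sqrt ((∑ i, u i ^ 2) + t ^ 2) * h := cs_dot2 u a t b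
    _ ≤ 1 * h := mul_le_mul_of_nonneg_right hut h0
    _ = h := one_mul h

lemma sup_inf {n : ℕ} (lam : ℝ) (hlam : 0 ≤ lam) (w : Fin n → ℝ) :
    IsGreatest {x | ∃ v : Fin n → ℝ, normInf v ≤ lam ∧ x = v ⬝ᵥ w} (lam * norm1 w) := by
  constructor
  · refine ⟨fun i => if w i < 0 then -lam else lam, ?_, ?_⟩
    · rcases isEmpty_or_nonempty (Fin n) with hE | hE
      · simp [normInf, Real.iSup_of_isEmpty, hlam]
      · refine ciSup_le fun i => ?_
        by_cases hwi : w i < 0 <;> simp [hwi, abs_le, hlam, neg_le_self hlam]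
    · simp only [dotProduct, norm1, Finset.mul_sum]
      refine Finset.sum_congr rfl fun i _ => ?_
      by_cases hwi : w i < 0
      · rw [if_pos hwi, abs_of_neg hwi]; ring
      · rw [if_neg hwi, abs_of_nonneg (not_lt.1 hwi)]
  · rintro x ⟨v, hv, rfl⟩
    calc v ⬝ᵥ w ≤ ∑ i, |v i| * |w i| := by
          refine Finset.sum_le_sum fun i _ => ?_
          calc v i * w i ≤ |v i * w i| := le_abs_self _
          _ = |v i| * |w i| := abs_mul _ _
    _ ≤ ∑ i, lam * |w i| := by
          refine Finset.sum_le_sum fun i _ => ?_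
          refine mul_le_mul_of_nonneg_right ?_ (abs_nonneg _)
          exact le_trans (le_ciSup (f := fun j => |v j|) (Set.Finite.bddAbove (Set.finite_range _)) i) hv
    _ = lam * norm1 w := by rw [norm1, Finset.mul_sum]

lemma sup_eps {n : ℕ} (ε : ℝ) (hε : 0 ≤ ε) (w : Fin n → ℝ) :
    IsGreatest {x | ∃ r : Fin n → ℝ, norm2 r ≤ ε ∧ x = r ⬝ᵥ w} (ε * norm2 w) := by
  constructor
  · rcases eq_or_lt_of_le (norm2_nonneg w) with h0 | hpos
    · exact ⟨0, by simpa [norm2] using hε, by simp [dotProduct, ← h0]⟩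
    · refine ⟨(ε / norm2 w) • w, ?_, ?_⟩
      · have e0 : ∑ i, ((ε / norm2 w) • w) i ^ 2 = (ε / norm2 w) ^ 2 * ∑ i, w i ^ 2 := by
          simp [mul_pow, Finset.mul_sum]
        have e2 : Real.sqrt (∑ i, w i ^ 2) = norm2 w := rfl
        have : norm2 ((ε / norm2 w) • w) = (ε / norm2 w) * norm2 w := by
          rw [norm2, e0, Real.sqrt_mul (sq_nonneg _), Real.sqrt_sq (by positivity), e2]
        rw [this, div_mul_cancel₀ _ (ne_of_gt hpos)]
      · have : ((ε / norm2 w) • w) ⬝ᵥ w = (ε / norm2 w) * ∑ i, w i ^ 2 := by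
          simp [dotProduct, Finset.mul_sum, sq, mul_assoc]
        rw [this, ← sq_norm2, sq]
        field_simp
  · rintro x ⟨r, hr, rfl⟩
    calc r ⬝ᵥ w ≤ norm2 r * norm2 w := cs_dot r w
    _ ≤ ε * norm2 w := mul_le_mul_of_nonneg_right hr (norm2_nonneg w)

lemma pair_triangle {N : ℕ} (x y : Fin N → ℝ) (a b : ℝ) :
    Real.sqrt ((∑ i, (x + y) i ^ 2) + (a + b) ^ 2) ≤
      Real.sqrt ((∑ i, x i ^ 2) + a ^ 2) + Real.sqrt ((∑ i, y i ^ 2) + b ^ 2) := by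
  set X := Real.sqrt ((∑ i, x i ^ 2) + a ^ 2) with hXd
  set Y := Real.sqrt ((∑ i, y i ^ 2) + b ^ 2) with hYd
  have hX : X ^ 2 = (∑ i, x i ^ 2) + a ^ 2 := Real.sq_sqrt (by positivity)
  have hY : Y ^ 2 = (∑ i, y i ^ 2) + b ^ 2 := Real.sq_sqrt (by positivity)
  have hX0 : 0 ≤ X := Real.sqrt_nonneg _
  have hY0 : 0 ≤ Y := Real.sqrt_nonneg _
  have hcs : x ⬝ᵥ y + a * b ≤ X * Y := cs_dot2 x y a b
  have hexp : (∑ i, (x + y) i ^ 2) + (a + b) ^ 2 =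
      ((∑ i, x i ^ 2) + a ^ 2) + ((∑ i, y i ^ 2) + b ^ 2) + 2 * (x ⬝ᵥ y + a * b) := by
    simp only [Pi.add_apply, add_sq, dotProduct, Finset.sum_add_distrib, mul_add,
      Finset.mul_sum]
    ring_nf
  have key : (∑ i, (x + y) i ^ 2) + (a + b) ^ 2 ≤ (X + Y) ^ 2 := by
    rw [hexp]; nlinarith [hcs, hX, hY]
  calc Real.sqrt ((∑ i, (x + y) i ^ 2) + (a + b) ^ 2) ≤ Real.sqrt ((X + Y) ^ 2) :=
        Real.sqrt_le_sqrt key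
  _ = X + Y := Real.sqrt_sq (by positivity)

lemma pair_smul {N : ℕ} (d : ℝ) (x : Fin N → ℝ) (t : ℝ) :
    Real.sqrt ((∑ i, (d • x) i ^ 2) + (d * t) ^ 2) = |d| * Real.sqrt ((∑ i, x i ^ 2) + t ^ 2) := by
  have : (∑ i, (d • x) i ^ 2) + (d * t) ^ 2 = d ^ 2 * ((∑ i, x i ^ 2) + t ^ 2) := by
    simp only [Pi.smul_apply, smul_eq_mul, mul_pow, ← Finset.mul_sum]
    ring
  rw [this, Real.sqrt_mul (sq_nonneg _), Real.sqrt_sq_eq_abs]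

lemma norm2_add_le {N : ℕ} (x y : Fin N → ℝ) : norm2 (x + y) ≤ norm2 x + norm2 y := by
  have := pair_triangle x y 0 0
  simpa [norm2] using this

lemma norm2_smul {N : ℕ} (d : ℝ) (x : Fin N → ℝ) : norm2 (d • x) = |d| * norm2 x := by
  have := pair_smul d x 0
  simpa [norm2] using this

lemma abs_le_normInf {N : ℕ} (v : Fin N → ℝ) (i : Fin N) : |v i| ≤ normInf v :=
  le_ciSup (f := fun j => |v j|) (Set.Finite.bddAbove (Set.finite_range _)) i

lemma normInf_le_iff {N : ℕ} {v : Fin N → ℝ} {lam : ℝ} (hlam : 0 ≤ lam) :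
    normInf v ≤ lam ↔ ∀ i, |v i| ≤ lam := by
  constructor
  · exact fun h i => le_trans (abs_le_normInf v i) h
  · intro h
    rcases isEmpty_or_nonempty (Fin N) with hE | hE
    · simp [normInf, Real.iSup_of_isEmpty, hlam]
    · exact ciSup_le h

lemma abs_le_norm2 {N : ℕ} (x : Fin N → ℝ) (i : Fin N) : |x i| ≤ norm2 x := by
  rw [← Real.sqrt_sq_eq_abs]
  exact Real.sqrt_le_sqrt (Finset.single_le_sum (f := fun j => x j ^ 2)
    (fun j _ => sq_nonneg _) (Finset.mem_univ i))

lemma norm2_le_iff {N : ℕ} {x : Fin N → ℝ} {ε : ℝ} (hε : 0 ≤ ε) :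
    norm2 x ≤ ε ↔ ∑ i, x i ^ 2 ≤ ε ^ 2 := by
  constructor
  · intro h
    calc ∑ i, x i ^ 2 = norm2 x ^ 2 := (sq_norm2 x).symm
    _ ≤ ε ^ 2 := pow_le_pow_left₀ (norm2_nonneg x) h 2
  · intro h
    calc norm2 x ≤ Real.sqrt (ε ^ 2) := Real.sqrt_le_sqrt h
    _ = ε := Real.sqrt_sq hε

lemma sqrt_le_one_iff {z : ℝ} (hz : 0 ≤ z) : Real.sqrt z ≤ 1 ↔ z ≤ 1 := by
  constructor
  · intro h; nlinarith [Real.sq_sqrt hz, Real.sqrt_nonneg z]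
  · intro h; rw [← Real.sqrt_one]; exact Real.sqrt_le_sqrt h

lemma abs_le_of_sq_le' {x C : ℝ} (hC : 0 ≤ C) (h : x ^ 2 ≤ C ^ 2) : |x| ≤ C := by
  rw [← Real.sqrt_sq_eq_abs]
  calc Real.sqrt (x ^ 2) ≤ Real.sqrt (C ^ 2) := Real.sqrt_le_sqrt h
  _ = C := Real.sqrt_sq hC

lemma abstract_dual {n k : ℕ} (R : Matrix (Fin n) (Fin k) ℝ) (c : Fin k → ℝ)
    (s ε lam : ℝ) (hs : 0 ≤ s) (hε : 0 ≤ ε) (hlam : 0 ≤ lam) :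
    sInf {ϕ : ℝ | ∃ w : Fin n → ℝ,
        ϕ = Real.sqrt ((∑ i, (c - Rᵀ.mulVec w) i ^ 2) + s ^ 2) + ε * norm2 w + lam * norm1 w} =
      sSup {ϕ : ℝ | ∃ (u : Fin k → ℝ) (t : ℝ) (v r : Fin n → ℝ),
        Real.sqrt ((∑ i, u i ^ 2) + t ^ 2) ≤ 1 ∧
        normInf v ≤ lam ∧ norm2 r ≤ ε ∧ R.mulVec u = v + r ∧
        ϕ = u ⬝ᵥ c + s * t} := by
  set F : (Fin n → ℝ) → ℝ := fun w =>
    Real.sqrt ((∑ i, (c - Rᵀ.mulVec w) i ^ 2) + s ^ 2) + ε * norm2 w + lam * norm1 w with hFdef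
  set Pset : Set ℝ := {ϕ : ℝ | ∃ w : Fin n → ℝ, ϕ = F w} with hPdef
  set Dset : Set ℝ := {ϕ : ℝ | ∃ (u : Fin k → ℝ) (t : ℝ) (v r : Fin n → ℝ),
      Real.sqrt ((∑ i, u i ^ 2) + t ^ 2) ≤ 1 ∧
      normInf v ≤ lam ∧ norm2 r ≤ ε ∧ R.mulVec u = v + r ∧
      ϕ = u ⬝ᵥ c + s * t} with hDdef
  show sInf Pset = sSup Dset
  -- basic facts
  have hFnonneg : ∀ w, 0 ≤ F w := by
    intro w
    have h1 : 0 ≤ ε * norm2 w := mul_nonneg hε (norm2_nonneg w)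
    have h2 : 0 ≤ lam * norm1 w :=
      mul_nonneg hlam (Finset.sum_nonneg fun i _ => abs_nonneg _)
    have h3 : 0 ≤ Real.sqrt ((∑ i, (c - Rᵀ.mulVec w) i ^ 2) + s ^ 2) := Real.sqrt_nonneg _
    simp only [hFdef]
    linarith
  have hP_ne : Pset.Nonempty := ⟨F 0, 0, rfl⟩
  have hD0 : (0 : ℝ) ∈ Dset := by
    refine ⟨0, 0, 0, 0, by simp, ?_, ?_, by simp, by simp⟩
    · rw [normInf_le_iff hlam]; intro i; simp [hlam]
    · simp [norm2, hε]
  have hD_ne : Dset.Nonempty := ⟨0, hD0⟩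
  -- pointwise supremum identity
  have hxw : ∀ (w : Fin n → ℝ) (u : Fin k → ℝ),
      w ⬝ᵥ R.mulVec u = (Rᵀ.mulVec w) ⬝ᵥ u := by
    intro w u
    rw [Matrix.dotProduct_mulVec, Matrix.mulVec_transpose]
  have hG : ∀ w : Fin n → ℝ, IsGreatest {x : ℝ | ∃ (u : Fin k → ℝ) (t : ℝ) (v r : Fin n → ℝ),
      Real.sqrt ((∑ i, u i ^ 2) + t ^ 2) ≤ 1 ∧ normInf v ≤ lam ∧ norm2 r ≤ ε ∧
      x = (u ⬝ᵥ c + s * t) + w ⬝ᵥ (v + r - R.mulVec u)} (F w) := by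
    intro w
    have key : ∀ (u : Fin k → ℝ) (t : ℝ) (v r : Fin n → ℝ),
        (u ⬝ᵥ c + s * t) + w ⬝ᵥ (v + r - R.mulVec u) =
          (u ⬝ᵥ (c - Rᵀ.mulVec w) + t * s) + (v ⬝ᵥ w + r ⬝ᵥ w) := by
      intro u t v r
      rw [dotProduct_sub, dotProduct_add, hxw w u, dotProduct_sub u c,
        dotProduct_comm w v, dotProduct_comm w r, dotProduct_comm (Rᵀ.mulVec w) u]
      ring
    obtain ⟨⟨u₀, t₀, hc₀, hv₀⟩, hub₁⟩ := sup_pair (c - Rᵀ.mulVec w) s hs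
    obtain ⟨⟨v₀, hc₁, hv₁⟩, hub₂⟩ := sup_inf lam hlam w
    obtain ⟨⟨r₀, hc₂, hv₂⟩, hub₃⟩ := sup_eps ε hε w
    constructor
    · refine ⟨u₀, t₀, v₀, r₀, hc₀, hc₁, hc₂, ?_⟩
      rw [key, ← hv₀, ← hv₁, ← hv₂, hFdef]
      ring
    · rintro x ⟨u, t, v, r, f1, f2, f3, rfl⟩
      rw [key]
      have b1 : u ⬝ᵥ (c - Rᵀ.mulVec w) + t * s ≤
          Real.sqrt ((∑ i, (c - Rᵀ.mulVec w) i ^ 2) + s ^ 2) := hub₁ ⟨u, t, f1, rfl⟩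
      have b2 : v ⬝ᵥ w ≤ lam * norm1 w := hub₂ ⟨v, f2, rfl⟩
      have b3 : r ⬝ᵥ w ≤ ε * norm2 w := hub₃ ⟨r, f3, rfl⟩
      simp only [hFdef]
      linarith
  -- weak duality
  have hweak : ∀ x ∈ Dset, ∀ w, x ≤ F w := by
    rintro x ⟨u, t, v, r, f1, f2, f3, hlink, rfl⟩ w
    refine (hG w).2 ⟨u, t, v, r, f1, f2, f3, ?_⟩
    rw [hlink, sub_self, dotProduct_zero, add_zero]
  have hDbdd : BddAbove Dset := ⟨F 0, fun x hx => hweak x hx 0⟩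
  have hPbdd : BddBelow Pset := by
    refine ⟨0, ?_⟩
    rintro p ⟨w, rfl⟩
    exact hFnonneg w
  have hM0 : (0 : ℝ) ≤ sSup Dset := le_csSup hDbdd hD0
  -- easy direction
  have dir1 : sSup Dset ≤ sInf Pset := by
    refine csSup_le hD_ne fun x hx => le_csInf hP_ne ?_
    rintro p ⟨w, rfl⟩
    exact hweak x hx w
  -- hard direction
  have dir2 : sInf Pset ≤ sSup Dset := by
    set M := sSup Dset with hMdef
    have main : ∀ δ : ℝ, 0 < δ → sInf Pset ≤ M + δ := by
      intro δ hδ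
      set Φ : (Fin k → ℝ) × ℝ × (Fin n → ℝ) × (Fin n → ℝ) → (Fin n → ℝ) × ℝ :=
        fun q => (q.2.2.1 + q.2.2.2 - R.mulVec q.1, q.1 ⬝ᵥ c + s * q.2.1) with hΦdef
      set D : Set ((Fin k → ℝ) × ℝ × (Fin n → ℝ) × (Fin n → ℝ)) :=
        {q | Real.sqrt ((∑ i, q.1 i ^ 2) + q.2.1 ^ 2) ≤ 1 ∧
          normInf q.2.2.1 ≤ lam ∧ norm2 q.2.2.2 ≤ ε} with hDsetdef
      set C : Set ((Fin n → ℝ) × ℝ) := {p | ∃ (u : Fin k → ℝ) (t : ℝ) (v r : Fin n → ℝ),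
        Real.sqrt ((∑ i, u i ^ 2) + t ^ 2) ≤ 1 ∧ normInf v ≤ lam ∧ norm2 r ≤ ε ∧
        p = (v + r - R.mulVec u, u ⬝ᵥ c + s * t)} with hCdef
      -- C is the image of D under Φ
      have hC_img : C = Φ '' D := by
        ext p
        constructor
        · rintro ⟨u, t, v, r, f1, f2, f3, rfl⟩
          exact ⟨(u, t, v, r), ⟨f1, f2, f3⟩, rfl⟩
        · rintro ⟨⟨u, t, v, r⟩, ⟨f1, f2, f3⟩, rfl⟩
          exact ⟨u, t, v, r, f1, f2, f3, rfl⟩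
      -- D is closed
      have hD_eq : D = {q : (Fin k → ℝ) × ℝ × (Fin n → ℝ) × (Fin n → ℝ) |
            (∑ i, q.1 i ^ 2) + q.2.1 ^ 2 ≤ 1} ∩
          ((⋂ i, {q : (Fin k → ℝ) × ℝ × (Fin n → ℝ) × (Fin n → ℝ) | |q.2.2.1 i| ≤ lam}) ∩
            {q : (Fin k → ℝ) × ℝ × (Fin n → ℝ) × (Fin n → ℝ) | ∑ i, q.2.2.2 i ^ 2 ≤ ε ^ 2}) := by
        ext q
        simp only [hDsetdef, Set.mem_setOf_eq, Set.mem_inter_iff, Set.mem_iInter]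
        rw [sqrt_le_one_iff (by positivity), normInf_le_iff hlam, norm2_le_iff hε]
      have hD_closed : IsClosed D := by
        rw [hD_eq]
        refine IsClosed.inter ?_ (IsClosed.inter ?_ ?_)
        · refine isClosed_le ?_ continuous_const
          exact Continuous.add
            (continuous_finset_sum _ fun i _ => ((continuous_apply i).comp continuous_fst).pow 2)
            ((continuous_fst.comp continuous_snd).pow 2)
        · refine isClosed_iInter fun i => isClosed_le ?_ continuous_const
          exact ((continuous_apply i).comp
            (continuous_fst.comp (continuous_snd.comp continuous_snd))).abs
        · refine isClosed_le ?_ continuous_const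
          exact continuous_finset_sum _ fun i _ => ((continuous_apply i).comp
            (continuous_snd.comp (continuous_snd.comp continuous_snd))).pow 2
      -- D is bounded
      have hD_bdd : Bornology.IsBounded D := by
        rw [isBounded_iff_forall_norm_le]
        refine ⟨max 1 (max lam ε), ?_⟩
        rintro q ⟨f1, f2, f3⟩
        have hsum1 : (∑ i, q.1 i ^ 2) + q.2.1 ^ 2 ≤ 1 :=
          (sqrt_le_one_iff (by positivity)).1 f1
        have hsumnn : (0:ℝ) ≤ ∑ i, q.1 i ^ 2 :=
          Finset.sum_nonneg fun i _ => sq_nonneg _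
        have hu : ‖q.1‖ ≤ 1 := by
          rw [pi_norm_le_iff_of_nonneg zero_le_one]
          intro i
          rw [Real.norm_eq_abs]
          refine abs_le_of_sq_le' zero_le_one ?_
          have h2 : q.1 i ^ 2 ≤ ∑ j, q.1 j ^ 2 := by
            exact Finset.single_le_sum (f := fun j => q.1 j ^ 2)
              (fun j _ => sq_nonneg _) (Finset.mem_univ i)
          rw [one_pow]
          nlinarith [sq_nonneg q.2.1]
        have ht : ‖q.2.1‖ ≤ 1 := by
          rw [Real.norm_eq_abs]
          refine abs_le_of_sq_le' zero_le_one ?_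
          rw [one_pow]
          linarith
        have hv : ‖q.2.2.1‖ ≤ lam := by
          rw [pi_norm_le_iff_of_nonneg hlam]
          intro i
          rw [Real.norm_eq_abs]
          exact (normInf_le_iff hlam).1 f2 i
        have hr : ‖q.2.2.2‖ ≤ ε := by
          rw [pi_norm_le_iff_of_nonneg hε]
          intro i
          rw [Real.norm_eq_abs]
          exact le_trans (abs_le_norm2 _ i) f3
        rw [Prod.norm_def, Prod.norm_def, Prod.norm_def]
        refine max_le (le_trans hu (le_max_left _ _)) (max_le (le_trans ht (le_max_left _ _))
          (max_le (le_trans hv (le_trans (le_max_left _ _) (le_max_right _ _)))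
            (le_trans hr (le_trans (le_max_right _ _) (le_max_right _ _)))))
      have hD_cpt : IsCompact D := Metric.isCompact_of_isClosed_isBounded hD_closed hD_bdd
      -- Φ is continuous
      have hmv : Continuous fun x : Fin k → ℝ => R.mulVec x := by
        refine continuous_pi fun i => ?_
        show Continuous fun x : Fin k → ℝ => ∑ j, R i j * x j
        exact continuous_finset_sum _ fun j _ => continuous_const.mul (continuous_apply j)
      have hΦcont : Continuous Φ := by
        refine Continuous.prodMk ?_ ?_
        · exact ((continuous_fst.comp (continuous_snd.comp continuous_snd)).add
            (continuous_snd.comp (continuous_snd.comp continuous_snd))).sub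
            (hmv.comp continuous_fst)
        · refine Continuous.add ?_ (continuous_const.mul (continuous_fst.comp continuous_snd))
          show Continuous fun q : (Fin k → ℝ) × ℝ × (Fin n → ℝ) × (Fin n → ℝ) =>
            ∑ i, q.1 i * c i
          exact continuous_finset_sum _ fun i _ =>
            ((continuous_apply i).comp continuous_fst).mul continuous_const
      have hCcompact : IsCompact C := by
        rw [hC_img]; exact hD_cpt.image hΦcont
      -- C is convex
      have hCconvex : Convex ℝ C := by
        rintro p₁ ⟨u₁, t₁, v₁, r₁, a1, a2, a3, rfl⟩ p₂ ⟨u₂, t₂, v₂, r₂, b1, b2, b3, rfl⟩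
          a b ha hb hab
        refine ⟨a • u₁ + b • u₂, a * t₁ + b * t₂, a • v₁ + b • v₂, a • r₁ + b • r₂, ?_, ?_, ?_, ?_⟩
        · calc Real.sqrt ((∑ i, (a • u₁ + b • u₂) i ^ 2) + (a * t₁ + b * t₂) ^ 2)
              ≤ Real.sqrt ((∑ i, (a • u₁) i ^ 2) + (a * t₁) ^ 2)
                + Real.sqrt ((∑ i, (b • u₂) i ^ 2) + (b * t₂) ^ 2) := pair_triangle _ _ _ _
          _ = |a| * Real.sqrt ((∑ i, u₁ i ^ 2) + t₁ ^ 2)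
                + |b| * Real.sqrt ((∑ i, u₂ i ^ 2) + t₂ ^ 2) := by rw [pair_smul, pair_smul]
          _ ≤ a * 1 + b * 1 := by
                rw [abs_of_nonneg ha, abs_of_nonneg hb]
                exact add_le_add (mul_le_mul_of_nonneg_left a1 ha)
                  (mul_le_mul_of_nonneg_left b1 hb)
          _ = 1 := by rw [mul_one, mul_one, hab]
        · rw [normInf_le_iff hlam]
          intro i
          simp only [Pi.add_apply, Pi.smul_apply, smul_eq_mul]
          calc |a * v₁ i + b * v₂ i| ≤ |a * v₁ i| + |b * v₂ i| := abs_add_le _ _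
          _ = a * |v₁ i| + b * |v₂ i| := by
                rw [abs_mul, abs_mul, abs_of_nonneg ha, abs_of_nonneg hb]
          _ ≤ a * lam + b * lam := add_le_add
                (mul_le_mul_of_nonneg_left ((normInf_le_iff hlam).1 a2 i) ha)
                (mul_le_mul_of_nonneg_left ((normInf_le_iff hlam).1 b2 i) hb)
          _ = lam := by rw [← add_mul, hab, one_mul]
        · calc norm2 (a • r₁ + b • r₂) ≤ norm2 (a • r₁) + norm2 (b • r₂) := norm2_add_le _ _
          _ = a * norm2 r₁ + b * norm2 r₂ := by
                rw [norm2_smul, norm2_smul, abs_of_nonneg ha, abs_of_nonneg hb]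
          _ ≤ a * ε + b * ε := add_le_add (mul_le_mul_of_nonneg_left a3 ha)
                (mul_le_mul_of_nonneg_left b3 hb)
          _ = ε := by rw [← add_mul, hab, one_mul]
        · rw [Prod.ext_iff]
          constructor
          · show (a • (v₁ + r₁ - R.mulVec u₁) + b • (v₂ + r₂ - R.mulVec u₂) : Fin n → ℝ)
              = a • v₁ + b • v₂ + (a • r₁ + b • r₂) - R.mulVec (a • u₁ + b • u₂)
            rw [Matrix.mulVec_add, Matrix.mulVec_smul, Matrix.mulVec_smul]
            simp only [smul_sub, smul_add]
            abel
          · show a * (u₁ ⬝ᵥ c + s * t₁) + b * (u₂ ⬝ᵥ c + s * t₂)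
              = (a • u₁ + b • u₂) ⬝ᵥ c + s * (a * t₁ + b * t₂)
            rw [add_dotProduct, smul_dotProduct, smul_dotProduct]
            simp only [smul_eq_mul]
            ring
      -- the point to separate
      have h00 : ((0 : Fin n → ℝ), (0 : ℝ)) ∈ C := by
        refine ⟨0, 0, 0, 0, by simp, ?_, ?_, by simp⟩
        · rw [normInf_le_iff hlam]; intro i; simp [hlam]
        · simp [norm2, hε]
      have hp₀ : ((0 : Fin n → ℝ), M + δ) ∉ C := by
        rintro ⟨u, t, v, r, f1, f2, f3, hp⟩
        have hz : (0 : Fin n → ℝ) = v + r - R.mulVec u := congrArg Prod.fst hp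
        have hα : M + δ = u ⬝ᵥ c + s * t := congrArg Prod.snd hp
        have hlink : R.mulVec u = v + r := by
          have h := hz.symm
          rw [sub_eq_zero] at h
          exact h.symm
        have hmem : u ⬝ᵥ c + s * t ∈ Dset := ⟨u, t, v, r, f1, f2, f3, hlink, rfl⟩
        have hle := le_csSup hDbdd hmem
        rw [← hα] at hle
        linarith
      obtain ⟨f, β, hfa, hfp⟩ :=
        geometric_hahn_banach_closed_point hCconvex hCcompact.isClosed hp₀
      set τ : ℝ := f (0, 1) with hτdef
      set wb : Fin n → ℝ := fun i => f (Pi.single i 1, 0) with hwbdef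
      have hf_eval : ∀ (z : Fin n → ℝ) (α : ℝ), f (z, α) = wb ⬝ᵥ z + τ * α := by
        intro z α
        have hsum : ∑ i, z i • (Pi.single i 1 : Fin n → ℝ) = z := by
          funext j
          rw [Finset.sum_apply]
          simp [Pi.single_apply]
        have hzdec : ((z, α) : (Fin n → ℝ) × ℝ)
            = (∑ i, z i • ((Pi.single i 1 : Fin n → ℝ), (0 : ℝ))) + α • ((0 : Fin n → ℝ), (1 : ℝ)) := by
          rw [Prod.ext_iff]
          constructor
          · simp [Prod.fst_sum, hsum]
          · simp [Prod.snd_sum]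
        rw [hzdec, map_add, _root_.map_smul, map_sum]
        simp only [_root_.map_smul, smul_eq_mul]
        have h3 : wb ⬝ᵥ z = ∑ i, z i * f (Pi.single i 1, 0) := by
          rw [dotProduct_comm]; rfl
        rw [h3, ← hτdef]
        ring
      have hfp' : β < τ * (M + δ) := by
        rw [hf_eval 0 (M + δ)] at hfp
        simpa using hfp
      have hβpos : 0 < β := by
        have h := hfa _ h00
        have h0 : f ((0 : Fin n → ℝ), (0 : ℝ)) = 0 := by
          rw [hf_eval]; simp
        rw [h0] at h
        exact h
      have hMδpos : 0 < M + δ := by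
        have : (0:ℝ) ≤ M := hM0
        linarith
      have hτpos : 0 < τ := by
        by_contra h
        push_neg at h
        nlinarith
      set w : Fin n → ℝ := τ⁻¹ • wb with hwdef
      obtain ⟨u, t, v, r, f1, f2, f3, hFw⟩ := (hG w).1
      have hpC : ((v + r - R.mulVec u : Fin n → ℝ), u ⬝ᵥ c + s * t) ∈ C :=
        ⟨u, t, v, r, f1, f2, f3, rfl⟩
      have h5 : wb ⬝ᵥ (v + r - R.mulVec u) + τ * (u ⬝ᵥ c + s * t) < β := by
        rw [← hf_eval]
        exact hfa _ hpC
      have hwz : w ⬝ᵥ (v + r - R.mulVec u) = τ⁻¹ * (wb ⬝ᵥ (v + r - R.mulVec u)) := by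
        rw [hwdef, smul_dotProduct]
        simp
      have hFlt : F w < M + δ := by
        rw [hFw, hwz]
        have hchain : wb ⬝ᵥ (v + r - R.mulVec u) + τ * (u ⬝ᵥ c + s * t) < τ * (M + δ) :=
          h5.trans hfp'
        have := mul_lt_mul_of_pos_left hchain (inv_pos.2 hτpos)
        calc u ⬝ᵥ c + s * t + τ⁻¹ * (wb ⬝ᵥ (v + r - R.mulVec u))
            = τ⁻¹ * (wb ⬝ᵥ (v + r - R.mulVec u) + τ * (u ⬝ᵥ c + s * t)) := by
              field_simp
              ring
        _ < τ⁻¹ * (τ * (M + δ)) := this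
        _ = M + δ := by field_simp
      exact le_trans (csInf_le hPbdd ⟨w, rfl⟩) hFlt.le
    by_contra hcon
    push_neg at hcon
    have := main ((sInf Pset - M) / 2) (by linarith)
    linarith
  exact le_antisymm dir2 dir1

lemma dot_mulVec_left {m n : ℕ} (M : Matrix (Fin m) (Fin n) ℝ) (a : Fin m → ℝ) (b : Fin n → ℝ) :
    a ⬝ᵥ (M.mulVec b) = (Mᵀ.mulVec a) ⬝ᵥ b := by
  rw [Matrix.dotProduct_mulVec, Matrix.mulVec_transpose]

lemma sum_sq_eq_dot {N : ℕ} (z : Fin N → ℝ) : ∑ i, z i ^ 2 = z ⬝ᵥ z := by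
  simp [dotProduct, sq]

lemma dot_self_nonneg {N : ℕ} (z : Fin N → ℝ) : 0 ≤ z ⬝ᵥ z :=
  Finset.sum_nonneg fun i _ => mul_self_nonneg _

/-- Strong duality between the regularized square-root LASSO with sketch `X̂ = PQᵀ` and its
dual: with `K := QᵀQ` positive definite, `c := K^{-1/2}Qᵀy`, `s := √(yᵀy − cᵀc)`, and
`R := P K^{1/2}`, `min_w ‖QPᵀw − y‖₂ + ε‖w‖₂ + λ‖w‖₁` equals
`max { uᵀc + s t : ‖(u,t)‖₂ ≤ 1, ‖v‖_∞ ≤ λ, ‖r‖₂ ≤ ε, Ru = v + r }`. -/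
theorem sketched_sqrt_lasso_dual
    {n m k : ℕ} (P : Matrix (Fin n) (Fin k) ℝ) (Q : Matrix (Fin m) (Fin k) ℝ)
    (hQ : Q.rank = k) (hK : (Qᵀ * Q).PosDef) (y : Fin m → ℝ)
    (ε lam : ℝ) (hε : 0 ≤ ε) (hlam : 0 ≤ lam) :
    ∀ c : Fin k → ℝ, c = (hK.posSemidef.sqrt)⁻¹.mulVec (Qᵀ.mulVec y) →
    ∀ s : ℝ, s = Real.sqrt (y ⬝ᵥ y - c ⬝ᵥ c) →
    ∀ R : Matrix (Fin n) (Fin k) ℝ, R = P * hK.posSemidef.sqrt →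
      sInf {ϕ : ℝ | ∃ w : Fin n → ℝ,
          ϕ = norm2 ((Q * Pᵀ).mulVec w - y) + ε * norm2 w + lam * norm1 w} =
        sSup {ϕ : ℝ | ∃ (u : Fin k → ℝ) (t : ℝ) (v r : Fin n → ℝ),
          Real.sqrt ((∑ i, u i ^ 2) + t ^ 2) ≤ 1 ∧
          normInf v ≤ lam ∧ norm2 r ≤ ε ∧ R.mulVec u = v + r ∧
          ϕ = u ⬝ᵥ c + s * t} := by
  intro c hc s hs R hR
  set S : Matrix (Fin k) (Fin k) ℝ := hK.posSemidef.sqrt with hSdef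
  -- basic facts about S
  have hS2 : S * S = Qᵀ * Q := psd_sqrt_mul_self hK.posSemidef
  have hShermit : Sᴴ = S := psd_sqrt_hermitian hK.posSemidef
  have hSsym : Sᵀ = S := by
    rw [← Matrix.conjTranspose_eq_transpose_of_trivial]; exact hShermit
  have hdetS : IsUnit S.det := by
    have hdK : 0 < (Qᵀ * Q).det := hK.det_pos
    rw [← hS2, Matrix.det_mul] at hdK
    have : S.det ≠ 0 := by
      intro h0; rw [h0] at hdK; simp at hdK
    exact isUnit_iff_ne_zero.2 this
  have hSinv : S * S⁻¹ = 1 := Matrix.mul_nonsing_inv S hdetS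
  have hSinvT : (S⁻¹)ᵀ = S⁻¹ := by rw [Matrix.transpose_nonsing_inv, hSsym]
  -- c ⬝ c ≤ y ⬝ y
  have hSc : S.mulVec c = Qᵀ.mulVec y := by
    rw [hc, Matrix.mulVec_mulVec, hSinv, Matrix.one_mulVec]
  have hy2 : 0 ≤ y ⬝ᵥ y - c ⬝ᵥ c := by
    set g : Fin m → ℝ := Q.mulVec (S⁻¹.mulVec c) with hg
    have hyg : y ⬝ᵥ g = c ⬝ᵥ c := by
      rw [hg, dot_mulVec_left Q y (S⁻¹.mulVec c), dot_mulVec_left S⁻¹ (Qᵀ.mulVec y) c, hSinvT,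
        ← hc, dotProduct_comm]
    have hgg : g ⬝ᵥ g = c ⬝ᵥ c := by
      rw [hg, dot_mulVec_left Q (Q.mulVec (S⁻¹.mulVec c)) (S⁻¹.mulVec c),
        Matrix.mulVec_mulVec, Matrix.mulVec_mulVec, ← hS2, Matrix.mul_assoc, hSinv,
        Matrix.mul_one, hSc, dot_mulVec_left S⁻¹ (Qᵀ.mulVec y) c, hSinvT, ← hc]
    have hpos := dot_self_nonneg (y - g)
    rw [sub_dotProduct, dotProduct_sub, dotProduct_sub, dotProduct_comm g y, hyg, hgg] at hpos
    linarith
  have hs0 : 0 ≤ s := hs ▸ Real.sqrt_nonneg _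
  have hssq : s ^ 2 = y ⬝ᵥ y - c ⬝ᵥ c := by rw [hs, Real.sq_sqrt hy2]
  -- pointwise identity between the two primal objectives
  have hid : ∀ w : Fin n → ℝ, norm2 ((Q * Pᵀ).mulVec w - y) =
      Real.sqrt ((∑ i, (c - Rᵀ.mulVec w) i ^ 2) + s ^ 2) := by
    intro w
    set x : Fin k → ℝ := Pᵀ.mulVec w with hx
    have hRT : Rᵀ.mulVec w = S.mulVec x := by
      rw [hR, Matrix.transpose_mul, hSsym, hx, ← Matrix.mulVec_mulVec]
    have hQx : (Q * Pᵀ).mulVec w = Q.mulVec x := by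
      rw [hx, Matrix.mulVec_mulVec]
    have e1 : (Q.mulVec x) ⬝ᵥ (Q.mulVec x) = x ⬝ᵥ ((Qᵀ * Q).mulVec x) := by
      rw [dot_mulVec_left Q (Q.mulVec x) x, Matrix.mulVec_mulVec, dotProduct_comm]
    have e2 : (Q.mulVec x) ⬝ᵥ y = x ⬝ᵥ (Qᵀ.mulVec y) := by
      rw [dotProduct_comm, dot_mulVec_left Q y x, dotProduct_comm]
    have e3 : y ⬝ᵥ (Q.mulVec x) = x ⬝ᵥ (Qᵀ.mulVec y) := by
      rw [dot_mulVec_left Q y x, dotProduct_comm]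
    have f1 : (S.mulVec x) ⬝ᵥ (S.mulVec x) = x ⬝ᵥ ((Qᵀ * Q).mulVec x) := by
      rw [dot_mulVec_left S (S.mulVec x) x, hSsym, Matrix.mulVec_mulVec, hS2, dotProduct_comm]
    have f2 : c ⬝ᵥ (S.mulVec x) = x ⬝ᵥ (Qᵀ.mulVec y) := by
      rw [dot_mulVec_left S c x, hSsym, hSc, dotProduct_comm]
    have f2' : (S.mulVec x) ⬝ᵥ c = x ⬝ᵥ (Qᵀ.mulVec y) := by
      rw [dotProduct_comm, f2]
    have hkey : ((Q.mulVec x - y) ⬝ᵥ (Q.mulVec x - y))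
        = ((c - S.mulVec x) ⬝ᵥ (c - S.mulVec x)) + s ^ 2 := by
      rw [sub_dotProduct, dotProduct_sub, dotProduct_sub, sub_dotProduct, dotProduct_sub,
        dotProduct_sub, hssq, e1, e2, e3, f1, f2, f2']
      ring
    have hsum : ∑ i, ((Q * Pᵀ).mulVec w - y) i ^ 2
        = (∑ i, (c - Rᵀ.mulVec w) i ^ 2) + s ^ 2 := by
      rw [sum_sq_eq_dot, sum_sq_eq_dot, hQx, hRT, hkey]
    rw [norm2, hsum]
  have hset : {ϕ : ℝ | ∃ w : Fin n → ℝ,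
        ϕ = norm2 ((Q * Pᵀ).mulVec w - y) + ε * norm2 w + lam * norm1 w}
      = {ϕ : ℝ | ∃ w : Fin n → ℝ,
        ϕ = Real.sqrt ((∑ i, (c - Rᵀ.mulVec w) i ^ 2) + s ^ 2)
          + ε * norm2 w + lam * norm1 w} := by
    ext φ
    constructor <;> rintro ⟨w, rfl⟩ <;> exact ⟨w, by rw [hid w]⟩
  rw [hset]
  exact abstract_dual R c s ε lam hs0 hε hlam
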